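/- Let p ≥ 1 be an integer, M_p > 0, M ≥ 0, and let f : ℝ^n → ℝ have M_p-Lipschitz p-th derivative. Fix x ∈ ℝ^n and let y be a global minimizer over ℝ^n of the function y ↦ Ω_p(f, x; y) + (M/(p+1)!) ∥y − x∥^{p+1}. Then ∥∇f(y)∥ ≤ ((M + M_p)/p!) ∥y − x∥^p. In particular, for M = p M_p one has ∥∇f(y)∥ ≤ ((p+1) M_p/p!) ∥y − x∥^p. -/

import Mathlib

set_option maxHeartbeats 1000000
open Fin Function

variable {E : Type*} [NormedAddCommGroup E] [NormedSpace ℝ E]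
variable {F : Type*} [NormedAddCommGroup F] [NormedSpace ℝ F]

/-- Swapping the last two arguments of the iterated derivative of a `C^{k+2}` function. -/
lemma iteratedFDeriv_swap_last_two {k : ℕ} {f : E → F} (hf : ContDiff ℝ (k + 2) f)
    (x : E) (m : Fin k → E) (a b : E) :
    iteratedFDeriv ℝ (k + 2) f x (Fin.snoc (Fin.snoc m a) b)
      = iteratedFDeriv ℝ (k + 2) f x (Fin.snoc (Fin.snoc m b) a) := by
  have hf1 : ContDiff ℝ (k + 1) (fderiv ℝ f) := by
    apply hf.fderiv_right
    norm_cast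
  have hf2 : ContDiff ℝ k (fderiv ℝ (fderiv ℝ f)) := by
    apply hf1.fderiv_right
    norm_cast
  have key : ∀ c d : E, iteratedFDeriv ℝ (k + 2) f x (Fin.snoc (Fin.snoc m c) d)
      = iteratedFDeriv ℝ k (fderiv ℝ (fderiv ℝ f)) x m c d := by
    intro c d
    rw [iteratedFDeriv_succ_apply_right]
    simp only [Fin.init_snoc, Fin.snoc_last]
    rw [iteratedFDeriv_succ_apply_right]
    simp only [Fin.init_snoc, Fin.snoc_last]
  rw [key, key]
  -- symmetry of the second derivative, pushed through `k` more derivatives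
  set H := fderiv ℝ (fderiv ℝ f) with hH
  have hsymm : ∀ z : E, ∀ c d : E, H z c d = H z d c := by
    intro z c d
    refine second_derivative_symmetric (f := f) (f' := fderiv ℝ f) (x := z) ?_ ?_ c d
    · intro w
      exact (hf.differentiable (by norm_cast) w).hasFDerivAt
    · exact (hf1.differentiable (by norm_cast) z).hasFDerivAt
  have happ : ∀ a b : E, iteratedFDeriv ℝ k (fun z => H z a b) x m
      = iteratedFDeriv ℝ k H x m a b := by
    intro a b
    have h1 : ContDiff ℝ k (fun z => H z a) := hf2.clm_apply contDiff_const
    rw [iteratedFDeriv_clm_apply_const_apply (c := fun z => H z a) (u := b) h1 le_rfl,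
      iteratedFDeriv_clm_apply_const_apply (c := H) (u := a) hf2 le_rfl]
  have hab : (fun z => H z a b) = (fun z => H z b a) := funext fun z => hsymm z a b
  rw [← happ a b, hab, happ b a]

universe u

/-- For the `k+1`-st derivative of a `C^{k+1}` function, evaluating with one argument `w`
at any slot and `v` elsewhere equals putting `w` in the last slot. -/
lemma iteratedFDeriv_update_diag {E : Type u} [NormedAddCommGroup E] [NormedSpace ℝ E]
    (k : ℕ) :
    ∀ {F : Type u} [NormedAddCommGroup F] [NormedSpace ℝ F]
      {f : E → F}, ContDiff ℝ (k + 1) f → ∀ (x v w : E) (i : Fin (k + 1)),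
      iteratedFDeriv ℝ (k + 1) f x (Function.update (fun _ => v) i w)
        = iteratedFDeriv ℝ (k + 1) f x (Fin.snoc (fun _ : Fin k => v) w) := by
  induction k with
  | zero =>
    intro F _ _ f hf x v w i
    congr 1
    funext j
    fin_cases i; fin_cases j
    simp [Fin.snoc]
  | succ k IH =>
    intro F _ _ f hf x v w i
    induction i using Fin.lastCases with
    | last =>
      congr 1
      funext j
      induction j using Fin.lastCases with
      | last => simp
      | cast j =>
        rw [Function.update_of_ne (by simp [Fin.ext_iff]; omega), Fin.snoc_castSucc]
    | cast i' =>
      have hg : ContDiff ℝ (k + 1) (fderiv ℝ f) := by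
        apply hf.fderiv_right; norm_cast
      rw [iteratedFDeriv_succ_apply_right]
      have h1 : Fin.init (Function.update (fun _ : Fin (k + 2) => v) i'.castSucc w)
          = Function.update (fun _ : Fin (k + 1) => v) i' w := by
        funext j
        simp [Fin.init, Function.update_apply, Fin.castSucc_inj]
      have h2 : (Function.update (fun _ : Fin (k + 2) => v) i'.castSucc w) (Fin.last (k + 1))
          = v := by
        rw [Function.update_of_ne]
        simp [Fin.ext_iff]; omega
      rw [h1, h2, IH hg x v w i']
      have h3 : iteratedFDeriv ℝ (k + 2) f x
            (Fin.snoc (Fin.snoc (fun _ : Fin k => v) w) v)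
          = iteratedFDeriv ℝ (k + 1) (fderiv ℝ f) x (Fin.snoc (fun _ : Fin k => v) w) v := by
        rw [iteratedFDeriv_succ_apply_right, Fin.init_snoc, Fin.snoc_last]
      rw [← h3, iteratedFDeriv_swap_last_two (by exact_mod_cast hf)]
      congr 1
      funext j
      induction j using Fin.lastCases with
      | last => simp
      | cast j =>
        rw [Fin.snoc_castSucc]
        induction j using Fin.lastCases with
        | last => simp
        | cast j => rw [Fin.snoc_castSucc, Fin.snoc_castSucc]

open MeasureTheory intervalIntegral in
/-- Taylor remainder bound: if `g` is `C^q` with `C`-Lipschitz `q`-th derivative, then the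
`q`-th Taylor polynomial approximates `g` to order `q+1`. -/
lemma taylor_remainder {E : Type u} [NormedAddCommGroup E] [NormedSpace ℝ E] (q : ℕ) :
    ∀ {F : Type u} [NormedAddCommGroup F] [NormedSpace ℝ F] [CompleteSpace F]
      (C : ℝ), 0 ≤ C → ∀ (g : E → F), ContDiff ℝ q g →
      (∀ a b : E, ‖iteratedFDeriv ℝ q g a - iteratedFDeriv ℝ q g b‖ ≤ C * ‖a - b‖) →
      ∀ x y : E,
      ‖g y - ∑ r ∈ Finset.range (q + 1),
          (1 / (Nat.factorial r : ℝ)) • iteratedFDeriv ℝ r g x (fun _ => y - x)‖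
        ≤ C / (Nat.factorial (q + 1) : ℝ) * ‖y - x‖ ^ (q + 1) := by
  induction q with
  | zero =>
    intro F _ _ _ C hC g hg hlip x y
    have h0 := hlip y x
    rw [iteratedFDeriv_zero_eq_comp, Function.comp_apply,
      Function.comp_apply, ← LinearIsometryEquiv.map_sub, LinearIsometryEquiv.norm_map] at h0
    simpa [Nat.factorial] using h0
  | succ q IH =>
    intro F _ _ _ C hC g hg hlip x y
    set v := y - x with hv
    set h := fderiv ℝ g with hdefh
    have hh : ContDiff ℝ q h := hg.fderiv_right (by norm_cast)
    have hhl : ∀ a b : E, ‖iteratedFDeriv ℝ q h a - iteratedFDeriv ℝ q h b‖ ≤ C * ‖a - b‖ := by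
      intro a b
      have hl := hlip a b
      rw [iteratedFDeriv_succ_eq_comp_right, iteratedFDeriv_succ_eq_comp_right,
        Function.comp_apply, Function.comp_apply, ← LinearIsometryEquiv.map_sub,
        LinearIsometryEquiv.norm_map] at hl
      exact hl
    set c : ℕ → F := fun r => iteratedFDeriv ℝ r g x (fun _ => v) with hc
    set φ : ℝ → F := fun t =>
      g (x + t • v) - ∑ r ∈ Finset.range (q + 2), (t ^ r / (Nat.factorial r : ℝ)) • c r with hφ
    set P : ℝ → (E →L[ℝ] F) := fun t =>
      h (x + t • v) - ∑ r ∈ Finset.range (q + 1),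
        (t ^ r / (Nat.factorial r : ℝ)) • iteratedFDeriv ℝ r h x (fun _ => v) with hP
    set ψ : ℝ → F := fun t => P t v with hψ
    -- the key pointwise bound from the induction hypothesis
    have hPbound : ∀ t : ℝ, ‖P t‖ ≤ C / (Nat.factorial (q + 1) : ℝ) * (|t| * ‖v‖) ^ (q + 1) := by
      intro t
      have hIH := IH C hC h hh hhl x (x + t • v)
      rw [add_sub_cancel_left] at hIH
      have hsum : ∑ r ∈ Finset.range (q + 1),
          (1 / (Nat.factorial r : ℝ)) • iteratedFDeriv ℝ r h x (fun _ => t • v)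
          = ∑ r ∈ Finset.range (q + 1),
          (t ^ r / (Nat.factorial r : ℝ)) • iteratedFDeriv ℝ r h x (fun _ => v) := by
        refine Finset.sum_congr rfl fun r _ => ?_
        have hd : (fun _ : Fin r => t • v)
            = fun i => (fun _ : Fin r => t) i • (fun _ : Fin r => v) i := rfl
        rw [hd, ContinuousMultilinearMap.map_smul_univ, Finset.prod_const, smul_smul,
          Finset.card_univ, Fintype.card_fin]
        congr 1
        ring
      rw [hsum] at hIH
      calc ‖P t‖ ≤ C / (Nat.factorial (q + 1) : ℝ) * ‖t • v‖ ^ (q + 1) := hIH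
        _ = C / (Nat.factorial (q + 1) : ℝ) * (|t| * ‖v‖) ^ (q + 1) := by
            rw [norm_smul, Real.norm_eq_abs]
    -- derivative of φ
    have hkey : ∀ r : ℕ, (iteratedFDeriv ℝ r h x (fun _ => v)) v = c (r + 1) := by
      intro r
      have hcr : c (r + 1) = iteratedFDeriv ℝ (r + 1) g x (fun _ => v) := rfl
      rw [hcr, iteratedFDeriv_succ_apply_right]
      rfl
    have hderiv : ∀ t : ℝ, HasDerivAt φ (ψ t) t := by
      intro t
      have l1 : HasDerivAt (fun s : ℝ => x + s • v) v t := by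
        simpa using ((hasDerivAt_id t).smul_const v).const_add x
      have l2 : HasFDerivAt g (h (x + t • v)) (x + t • v) :=
        ((hg.differentiable (by norm_cast)) (x + t • v)).hasFDerivAt
      have la : HasDerivAt (fun s : ℝ => g (x + s • v)) (h (x + t • v) v) t :=
        l2.comp_hasDerivAt t l1
      have lb : HasDerivAt (fun s : ℝ => ∑ r ∈ Finset.range (q + 2),
            (s ^ r / (Nat.factorial r : ℝ)) • c r)
          (∑ r ∈ Finset.range (q + 1), (t ^ r / (Nat.factorial r : ℝ)) • c (r + 1)) t := by
        have hsplit : (fun s : ℝ => ∑ r ∈ Finset.range (q + 2),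
              (s ^ r / (Nat.factorial r : ℝ)) • c r)
            = fun s : ℝ => (∑ r ∈ Finset.range (q + 1),
              (s ^ (r + 1) / (Nat.factorial (r + 1) : ℝ)) • c (r + 1)) + (1 : ℝ) • c 0 := by
          funext s
          rw [Finset.sum_range_succ']
          norm_num
        rw [hsplit]
        have lterm : ∀ r ∈ Finset.range (q + 1), HasDerivAt
            (fun s : ℝ => (s ^ (r + 1) / (Nat.factorial (r + 1) : ℝ)) • c (r + 1))
            ((t ^ r / (Nat.factorial r : ℝ)) • c (r + 1)) t := by
          intro r _
          have hp : HasDerivAt (fun s : ℝ => s ^ (r + 1) / (Nat.factorial (r + 1) : ℝ))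
              ((r + 1 : ℕ) * t ^ r / (Nat.factorial (r + 1) : ℝ)) t :=
            (hasDerivAt_pow (r + 1) t).div_const _
          have := hp.smul_const (c (r + 1))
          convert this using 2
          rw [Nat.factorial_succ]
          push_cast
          field_simp
        exact ((HasDerivAt.fun_sum lterm).add_const _)
      have := la.sub lb
      convert this using 1
      · rfl
      rw [hψ, hP]
      simp only [ContinuousLinearMap.sub_apply, ContinuousLinearMap.coe_sum',
        Finset.sum_apply, ContinuousLinearMap.coe_smul', Pi.smul_apply]
      congr 1
      refine Finset.sum_congr rfl fun r _ => ?_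
      rw [hkey r]
    -- integrate
    have hcontP : Continuous P := by
      have hch : Continuous h := hg.continuous_fderiv (by norm_cast)
      have h1 : Continuous fun t : ℝ => h (x + t • v) :=
        hch.comp (by continuity)
      apply h1.sub
      continuity
    have hcontψ : Continuous ψ := by
      have : ψ = fun t => ((ContinuousLinearMap.apply ℝ F v)) (P t) := rfl
      rw [this]
      exact (ContinuousLinearMap.apply ℝ F v).continuous.comp hcontP
    have hint : IntervalIntegrable ψ volume 0 1 := hcontψ.intervalIntegrable 0 1
    have heq : ∫ t in (0:ℝ)..1, ψ t = φ 1 - φ 0 :=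
      integral_eq_sub_of_hasDerivAt (fun t _ => hderiv t) hint
    have hφ0 : φ 0 = 0 := by
      rw [hφ]
      simp only [zero_smul, add_zero]
      rw [Finset.sum_eq_single 0]
      · simp [hc, iteratedFDeriv_zero_apply]
      · intro r _ hr
        rw [zero_pow hr]
        simp
      · intro habs
        simp at habs
    have hφ1 : φ 1 = g y - ∑ r ∈ Finset.range (q + 2),
        (1 / (Nat.factorial r : ℝ)) • iteratedFDeriv ℝ r g x (fun _ => v) := by
      have h1 : φ 1 = g (x + (1 : ℝ) • v)
          - ∑ r ∈ Finset.range (q + 2), ((1 : ℝ) ^ r / (Nat.factorial r : ℝ)) • c r := rfl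
      have hxy : x + (1 : ℝ) • v = y := by rw [one_smul, hv]; abel
      rw [h1, hxy]
      congr 1
      refine Finset.sum_congr rfl fun r _ => ?_
      rw [one_pow]
    have hbound : ‖∫ t in (0:ℝ)..1, ψ t‖
        ≤ C / (Nat.factorial (q + 2) : ℝ) * ‖v‖ ^ (q + 2) := by
      have hb : ∀ t ∈ Set.Ioc (0:ℝ) 1, ‖ψ t‖
          ≤ (C / (Nat.factorial (q + 1) : ℝ) * ‖v‖ ^ (q + 2)) * t ^ (q + 1) := by
        intro t ht
        have h1 : ‖ψ t‖ ≤ ‖P t‖ * ‖v‖ := (P t).le_opNorm v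
        have h2 := hPbound t
        rw [abs_of_pos ht.1] at h2
        calc ‖ψ t‖ ≤ ‖P t‖ * ‖v‖ := h1
          _ ≤ (C / (Nat.factorial (q + 1) : ℝ) * (t * ‖v‖) ^ (q + 1)) * ‖v‖ := by
              apply mul_le_mul_of_nonneg_right h2 (norm_nonneg v)
          _ = (C / (Nat.factorial (q + 1) : ℝ) * ‖v‖ ^ (q + 2)) * t ^ (q + 1) := by
              rw [mul_pow]
              ring
      have hgint : IntervalIntegrable
          (fun t : ℝ => (C / (Nat.factorial (q + 1) : ℝ) * ‖v‖ ^ (q + 2)) * t ^ (q + 1))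
          volume 0 1 := (continuous_const.mul (continuous_pow _)).intervalIntegrable 0 1
      have hae : ∀ᵐ t ∂(MeasureTheory.volume.restrict (Set.uIoc (0:ℝ) 1)), ‖ψ t‖
          ≤ (C / (Nat.factorial (q + 1) : ℝ) * ‖v‖ ^ (q + 2)) * t ^ (q + 1) := by
        refine (MeasureTheory.ae_restrict_iff' measurableSet_uIoc).mpr
          (Filter.Eventually.of_forall fun t ht => ?_)
        rw [Set.uIoc_of_le (by norm_num : (0:ℝ) ≤ 1)] at ht
        exact hb t ht
      have hmain := intervalIntegral.norm_integral_le_abs_of_norm_le hae hgint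
      have hval : (∫ t in (0:ℝ)..1,
            (C / (Nat.factorial (q + 1) : ℝ) * ‖v‖ ^ (q + 2)) * t ^ (q + 1))
          = (C / (Nat.factorial (q + 1) : ℝ) * ‖v‖ ^ (q + 2)) * (1 / ((q : ℝ) + 2)) := by
        rw [intervalIntegral.integral_const_mul, integral_pow]
        push_cast
        ring
      have hnn : (0:ℝ) ≤ ∫ t in (0:ℝ)..1,
          (C / (Nat.factorial (q + 1) : ℝ) * ‖v‖ ^ (q + 2)) * t ^ (q + 1) := by
        rw [hval]
        positivity
      have hfac : ((Nat.factorial (q + 1) : ℝ)) ≠ 0 :=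
        Nat.cast_ne_zero.mpr (Nat.factorial_ne_zero _)
      have hq2 : ((q : ℝ) + 2) ≠ 0 := by positivity
      calc ‖∫ t in (0:ℝ)..1, ψ t‖
          ≤ |∫ t in (0:ℝ)..1,
              (C / (Nat.factorial (q + 1) : ℝ) * ‖v‖ ^ (q + 2)) * t ^ (q + 1)| := hmain
        _ = (C / (Nat.factorial (q + 1) : ℝ) * ‖v‖ ^ (q + 2)) * (1 / ((q : ℝ) + 2)) := by
            rw [abs_of_nonneg hnn, hval]
        _ = C / (Nat.factorial (q + 2) : ℝ) * ‖v‖ ^ (q + 2) := by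
            rw [Nat.factorial_succ (q + 1)]
            push_cast
            rw [div_mul_eq_mul_div, mul_one_div, div_div, div_mul_eq_mul_div,
              mul_comm ((Nat.factorial (q + 1) : ℝ)) ((q : ℝ) + 2)]
            ring_nf
    rw [heq, hφ0, sub_zero, hφ1] at hbound
    exact hbound



/-- The `p`-th order Taylor polynomial of `f` at `x`, evaluated at `y`:
`Ω_p(f, x; y) = ∑_{r=0}^p (1/r!) ∇^r f(x)[y-x, …, y-x]`. -/
noncomputable def taylorModel {n : ℕ} (p : ℕ) (f : EuclideanSpace ℝ (Fin n) → ℝ)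
    (x y : EuclideanSpace ℝ (Fin n)) : ℝ :=
  ∑ r ∈ Finset.range (p + 1),
    (1 / (Nat.factorial r : ℝ)) * iteratedFDeriv ℝ r f x (fun _ => y - x)

/-- `f` is `p` times continuously differentiable with `M`-Lipschitz `p`-th derivative. -/
def HasLipschitzPthDeriv {n : ℕ} (p : ℕ) (M : ℝ) (f : EuclideanSpace ℝ (Fin n) → ℝ) : Prop :=
  ContDiff ℝ p f ∧
    ∀ x y : EuclideanSpace ℝ (Fin n),
      ‖iteratedFDeriv ℝ p f x - iteratedFDeriv ℝ p f y‖ ≤ M * ‖x - y‖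

/-- Gradient bound at the regularized Taylor step: if `y` minimizes the regularized
Taylor model `Ω_p(f,x;·) + (M/(p+1)!)‖· - x‖^{p+1}`, then
`‖∇f(y)‖ ≤ ((M + M_p)/p!) ‖y - x‖^p`; in particular for `M = p M_p`,
`‖∇f(y)‖ ≤ ((p+1) M_p/p!) ‖y - x‖^p`. -/
theorem tensor_step_gradient_bound {n : ℕ} (p : ℕ) (hp : 1 ≤ p) (Mp M : ℝ)
    (hMp : 0 < Mp) (hM : 0 ≤ M)
    (f : EuclideanSpace ℝ (Fin n) → ℝ) (hlip : HasLipschitzPthDeriv p Mp f)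
    (x y : EuclideanSpace ℝ (Fin n))
    (hy : IsMinOn (fun z => taylorModel p f x z
        + (M / (Nat.factorial (p + 1) : ℝ)) * ‖z - x‖ ^ (p + 1)) Set.univ y) :
    ‖gradient f y‖ ≤ ((M + Mp) / (Nat.factorial p : ℝ)) * ‖y - x‖ ^ p ∧
      (M = (p : ℝ) * Mp →
        ‖gradient f y‖ ≤ (((p : ℝ) + 1) * Mp / (Nat.factorial p : ℝ)) * ‖y - x‖ ^ p) := by
  classical
  obtain ⟨hcd, hlipd⟩ := hlip
  obtain ⟨q, rfl⟩ : ∃ q, p = q + 1 := ⟨p - 1, by omega⟩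
  set v := y - x with hv
  set h := fderiv ℝ f with hdefh
  have hh : ContDiff ℝ q h := hcd.fderiv_right (by norm_cast)
  have hhl : ∀ a b : EuclideanSpace ℝ (Fin n),
      ‖iteratedFDeriv ℝ q h a - iteratedFDeriv ℝ q h b‖ ≤ Mp * ‖a - b‖ := by
    intro a b
    have hl := hlipd a b
    rw [iteratedFDeriv_succ_eq_comp_right, iteratedFDeriv_succ_eq_comp_right,
      Function.comp_apply, Function.comp_apply, ← LinearIsometryEquiv.map_sub,
      LinearIsometryEquiv.norm_map] at hl
    exact hl
  set P : EuclideanSpace ℝ (Fin n) →L[ℝ] ℝ := ∑ r ∈ Finset.range (q + 1),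
    (1 / (Nat.factorial r : ℝ)) • iteratedFDeriv ℝ r h x (fun _ => v) with hPdef
  have hrem : ‖h y - P‖ ≤ Mp / (Nat.factorial (q + 1) : ℝ) * ‖v‖ ^ (q + 1) :=
    taylor_remainder q Mp hMp.le h hh hhl x y
  -- derivative of the Taylor polynomial
  have hterm : ∀ r : ℕ, HasFDerivAt
      (fun z => (1 / (Nat.factorial r : ℝ)) * iteratedFDeriv ℝ r f x (fun _ => z - x))
      ((1 / (Nat.factorial r : ℝ)) • ∑ i : Fin r,
        ((iteratedFDeriv ℝ r f x).toContinuousLinearMap (fun _ => v) i)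
          ∘L (ContinuousLinearMap.id ℝ _)) y := by
    intro r
    have hsub : ∀ i : Fin r, HasFDerivAt (fun z : EuclideanSpace ℝ (Fin n) => z - x)
        (ContinuousLinearMap.id ℝ _) y := fun _ => (hasFDerivAt_id y).sub_const x
    exact (HasFDerivAt.multilinear_comp (iteratedFDeriv ℝ r f x) hsub).const_mul _
  have hTay : HasFDerivAt (fun z => taylorModel (q + 1) f x z)
      (∑ r ∈ Finset.range (q + 2), ((1 / (Nat.factorial r : ℝ)) • ∑ i : Fin r,
        ((iteratedFDeriv ℝ r f x).toContinuousLinearMap (fun _ => v) i)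
          ∘L (ContinuousLinearMap.id ℝ _))) y := by
    have hfe : (fun z => taylorModel (q + 1) f x z) = fun z =>
        ∑ r ∈ Finset.range (q + 2),
          (1 / (Nat.factorial r : ℝ)) * iteratedFDeriv ℝ r f x (fun _ => z - x) := rfl
    rw [hfe]
    exact HasFDerivAt.fun_sum fun r _ => hterm r
  have hID : (∑ r ∈ Finset.range (q + 2), ((1 / (Nat.factorial r : ℝ)) • ∑ i : Fin r,
      ((iteratedFDeriv ℝ r f x).toContinuousLinearMap (fun _ => v) i)
        ∘L (ContinuousLinearMap.id ℝ _))) = P := by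
    rw [Finset.sum_range_succ']
    have h0 : ((1 / (Nat.factorial 0 : ℝ)) • ∑ i : Fin 0,
        ((iteratedFDeriv ℝ 0 f x).toContinuousLinearMap (fun _ => v) i)
          ∘L (ContinuousLinearMap.id ℝ _)) = 0 := by simp
    rw [h0, add_zero, hPdef]
    refine Finset.sum_congr rfl fun k hk => ?_
    have hfk : ContDiff ℝ (k + 1) f := by
      apply hcd.of_le
      rw [Finset.mem_range] at hk
      have hk1 : k + 1 ≤ q + 1 := by omega
      exact_mod_cast hk1
    ext w
    have hupd : ∀ i : Fin (k + 1),
        (iteratedFDeriv ℝ (k + 1) f x) (Function.update (fun _ => v) i w)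
          = (iteratedFDeriv ℝ (k + 1) f x) (Fin.snoc (fun _ : Fin k => v) w) :=
      fun i => iteratedFDeriv_update_diag k hfk x v w i
    have hsnoc : (iteratedFDeriv ℝ (k + 1) f x) (Fin.snoc (fun _ : Fin k => v) w)
        = (iteratedFDeriv ℝ k h x (fun _ => v)) w := by
      rw [iteratedFDeriv_succ_apply_right, Fin.init_snoc, Fin.snoc_last]
    simp only [ContinuousLinearMap.smul_apply, ContinuousLinearMap.coe_sum',
      Finset.sum_apply, ContinuousLinearMap.comp_apply, ContinuousLinearMap.coe_id', id_eq,
      ContinuousMultilinearMap.toContinuousLinearMap_apply]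
    rw [Finset.sum_congr rfl fun i _ => (by rw [hupd i, hsnoc] :
        (iteratedFDeriv ℝ (k + 1) f x) (Function.update (fun _ => v) i w)
          = (iteratedFDeriv ℝ k h x (fun _ => v)) w)]
    rw [Finset.sum_const, Finset.card_univ, Fintype.card_fin, nsmul_eq_mul]
    have hfacne : ((Nat.factorial k : ℝ)) ≠ 0 := Nat.cast_ne_zero.mpr (Nat.factorial_ne_zero _)
    rw [smul_eq_mul, Nat.factorial_succ]
    push_cast
    field_simp
    rw [mul_comm (Nat.factorial k : ℝ), smul_eq_mul]
    field_simp
  -- the regularizer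
  have hpr : (1 : ℝ) < (q : ℝ) + 2 := by
    have : (0:ℝ) ≤ (q : ℝ) := Nat.cast_nonneg q
    linarith
  have hregF := (hasFDerivAt_norm_rpow v hpr).comp y ((hasFDerivAt_id y).sub_const x)
  have hfun : (fun z : EuclideanSpace ℝ (Fin n) => ‖z - x‖ ^ ((q : ℝ) + 2))
      = fun z => ‖z - x‖ ^ (q + 1 + 1) := by
    funext z
    rw [show ((q : ℝ) + 2) = ((q + 1 + 1 : ℕ) : ℝ) by push_cast; ring, Real.rpow_natCast]
  set ρ : EuclideanSpace ℝ (Fin n) →L[ℝ] ℝ :=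
    ((((q : ℝ) + 2) * ‖v‖ ^ ((q : ℝ) + 2 - 2)) • innerSL ℝ v)
      ∘L (ContinuousLinearMap.id ℝ _) with hρdef
  have hreg : HasFDerivAt (fun z : EuclideanSpace ℝ (Fin n) => ‖z - x‖ ^ (q + 1 + 1)) ρ y := by
    rw [← hfun]
    exact hregF
  have hρnorm : ‖ρ‖ ≤ ((q : ℝ) + 2) * ‖v‖ ^ (q + 1) := by
    rw [hρdef, ContinuousLinearMap.comp_id]
    refine le_trans (ContinuousLinearMap.opNorm_smul_le _ _) ?_
    rw [innerSL_apply_norm, Real.norm_eq_abs]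
    rcases eq_or_ne v 0 with hv0 | hv0
    · simp only [hv0, norm_zero, mul_zero]
      positivity
    · have hvpos : 0 < ‖v‖ := norm_pos_iff.mpr hv0
      have hpow : ‖v‖ ^ ((q : ℝ) + 2 - 2) * ‖v‖ = ‖v‖ ^ (q + 1) := by
        rw [show ((q : ℝ) + 2 - 2) = ((q : ℕ) : ℝ) by push_cast; ring, Real.rpow_natCast,
          ← pow_succ]
      refine le_of_eq ?_
      calc |((q : ℝ) + 2) * ‖v‖ ^ ((q : ℝ) + 2 - 2)| * ‖v‖
          = ((q : ℝ) + 2) * (‖v‖ ^ ((q : ℝ) + 2 - 2) * ‖v‖) := by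
            rw [abs_of_nonneg (by positivity)]
            ring
        _ = ((q : ℝ) + 2) * ‖v‖ ^ (q + 1) := by rw [hpow]
  -- minimality gives the first-order condition
  have hmodel : HasFDerivAt (fun z => taylorModel (q + 1) f x z
      + (M / (Nat.factorial (q + 1 + 1) : ℝ)) * ‖z - x‖ ^ (q + 1 + 1))
      (P + (M / (Nat.factorial (q + 1 + 1) : ℝ)) • ρ) y := by
    exact (hID ▸ hTay).add (hreg.const_mul _)
  have hzero : P + (M / (Nat.factorial (q + 1 + 1) : ℝ)) • ρ = 0 :=
    (hy.isLocalMin Filter.univ_mem).hasFDerivAt_eq_zero hmodel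
  have hPnorm : ‖P‖ ≤ M / (Nat.factorial (q + 1) : ℝ) * ‖v‖ ^ (q + 1) := by
    have hPeq : P = -((M / (Nat.factorial (q + 1 + 1) : ℝ)) • ρ) :=
      eq_neg_of_add_eq_zero_left hzero
    have hMk : (0 : ℝ) ≤ M / (Nat.factorial (q + 1 + 1) : ℝ) := by positivity
    rw [hPeq, norm_neg]
    refine le_trans (ContinuousLinearMap.opNorm_smul_le _ _) ?_
    rw [Real.norm_eq_abs, abs_of_nonneg hMk]
    calc M / (Nat.factorial (q + 1 + 1) : ℝ) * ‖ρ‖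
        ≤ M / (Nat.factorial (q + 1 + 1) : ℝ) * (((q : ℝ) + 2) * ‖v‖ ^ (q + 1)) := by
          gcongr
      _ = M / (Nat.factorial (q + 1) : ℝ) * ‖v‖ ^ (q + 1) := by
          rw [Nat.factorial_succ (q + 1)]
          have hfacne : ((Nat.factorial (q + 1) : ℝ)) ≠ 0 :=
            Nat.cast_ne_zero.mpr (Nat.factorial_ne_zero _)
          push_cast
          field_simp
          ring
  have hgrad : ‖gradient f y‖ = ‖h y‖ := by
    rw [show gradient f y = (InnerProductSpace.toDual ℝ _).symm (fderiv ℝ f y) from rfl]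
    rw [LinearIsometryEquiv.norm_map]
  have hmain : ‖h y‖ ≤ (M + Mp) / (Nat.factorial (q + 1) : ℝ) * ‖v‖ ^ (q + 1) := by
    calc ‖h y‖ = ‖(h y - P) + P‖ := by rw [sub_add_cancel]
      _ ≤ ‖h y - P‖ + ‖P‖ := norm_add_le _ _
      _ ≤ Mp / (Nat.factorial (q + 1) : ℝ) * ‖v‖ ^ (q + 1)
          + M / (Nat.factorial (q + 1) : ℝ) * ‖v‖ ^ (q + 1) := add_le_add hrem hPnorm
      _ = (M + Mp) / (Nat.factorial (q + 1) : ℝ) * ‖v‖ ^ (q + 1) := by ring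
  constructor
  · rw [hgrad]
    exact hmain
  · intro hMeq
    rw [hgrad]
    have heq2 : (((q + 1 : ℕ) : ℝ) + 1) * Mp / (Nat.factorial (q + 1) : ℝ)
        = (M + Mp) / (Nat.factorial (q + 1) : ℝ) := by
      rw [hMeq]
      push_cast
      ring
    rw [heq2]
    exact hmain
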